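/- Let A, B ∈ ℂ^{n×n} be Hermitian and let f : ℝ → ℂ be L-Lipschitz on a set containing all eigenvalues of A and of B. Then ‖f(A) − f(B)‖_F ≤ L‖A − B‖_F, where f(M) denotes the eigenvalue transformation applied via a unitary eigendecomposition of M. -/

import Mathlib

open Matrix BigOperators

/-- Squared Frobenius norm of a matrix. -/
noncomputable def frobSq {m n α : Type*} [Fintype m] [Fintype n] [Norm α]
    (A : Matrix m n α) : ℝ :=
  ∑ i, ∑ j, ‖A i j‖ ^ 2

/-- Eigenvalue transformation of a Hermitian matrix `M = Σᵢ λᵢ wᵢwᵢᴴ` by `g : ℝ → ℂ`: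
`g(M) := Σᵢ g(λᵢ) wᵢwᵢᴴ`, defined via a unitary eigendecomposition. -/
noncomputable def hermFun {n : ℕ} {M : Matrix (Fin n) (Fin n) ℂ}
    (hM : M.IsHermitian) (g : ℝ → ℂ) : Matrix (Fin n) (Fin n) ℂ :=
  (hM.eigenvectorUnitary : Matrix (Fin n) (Fin n) ℂ) *
    Matrix.diagonal (g ∘ hM.eigenvalues) *
    (hM.eigenvectorUnitary : Matrix (Fin n) (Fin n) ℂ)ᴴ

lemma frobSq_eq_re_trace {n : ℕ} (M : Matrix (Fin n) (Fin n) ℂ) :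
    frobSq M = (Matrix.trace (Mᴴ * M)).re := by
  simp only [frobSq, Matrix.trace, Matrix.diag, Matrix.mul_apply, Matrix.conjTranspose_apply]
  rw [Complex.re_sum]
  rw [Finset.sum_comm]
  congr 1; ext i
  rw [Complex.re_sum]
  congr 1; ext j
  rw [Complex.star_def, ← Complex.normSq_eq_conj_mul_self]
  rw [Complex.normSq_eq_norm_sq, Complex.ofReal_re]

lemma frobSq_conj {n : ℕ} (U V : Matrix.unitaryGroup (Fin n) ℂ)
    (X : Matrix (Fin n) (Fin n) ℂ) :
    frobSq ((U : Matrix (Fin n) (Fin n) ℂ)ᴴ * X * (V : Matrix (Fin n) (Fin n) ℂ)) = frobSq X := by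
  have hU : (U : Matrix (Fin n) (Fin n) ℂ) * (U : Matrix (Fin n) (Fin n) ℂ)ᴴ = 1 := by
    simpa [Matrix.star_eq_conjTranspose] using (Unitary.mul_star_self_of_mem U.2)
  have hV : (V : Matrix (Fin n) (Fin n) ℂ) * (V : Matrix (Fin n) (Fin n) ℂ)ᴴ = 1 := by
    simpa [Matrix.star_eq_conjTranspose] using (Unitary.mul_star_self_of_mem V.2)
  rw [frobSq_eq_re_trace, frobSq_eq_re_trace]
  congr 1
  simp only [Matrix.conjTranspose_mul, Matrix.conjTranspose_conjTranspose, mul_assoc]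
  rw [← mul_assoc (U : Matrix (Fin n) (Fin n) ℂ) (U : Matrix (Fin n) (Fin n) ℂ)ᴴ, hU, one_mul,
    Matrix.trace_mul_comm]
  simp only [mul_assoc]
  rw [hV, mul_one]

lemma key_conj {n : ℕ} (U V : Matrix.unitaryGroup (Fin n) ℂ)
    (d e : Fin n → ℂ) :
    (U : Matrix (Fin n) (Fin n) ℂ)ᴴ *
      ((U : Matrix (Fin n) (Fin n) ℂ) * Matrix.diagonal d * (U : Matrix (Fin n) (Fin n) ℂ)ᴴ -
       (V : Matrix (Fin n) (Fin n) ℂ) * Matrix.diagonal e * (V : Matrix (Fin n) (Fin n) ℂ)ᴴ) *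
      (V : Matrix (Fin n) (Fin n) ℂ)
    = Matrix.diagonal d * ((U : Matrix (Fin n) (Fin n) ℂ)ᴴ * (V : Matrix (Fin n) (Fin n) ℂ)) -
      ((U : Matrix (Fin n) (Fin n) ℂ)ᴴ * (V : Matrix (Fin n) (Fin n) ℂ)) * Matrix.diagonal e := by
  have hU : (U : Matrix (Fin n) (Fin n) ℂ)ᴴ * (U : Matrix (Fin n) (Fin n) ℂ) = 1 := by
    simpa [Matrix.star_eq_conjTranspose] using (Unitary.star_mul_self_of_mem U.2)
  have hV : (V : Matrix (Fin n) (Fin n) ℂ)ᴴ * (V : Matrix (Fin n) (Fin n) ℂ) = 1 := by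
    simpa [Matrix.star_eq_conjTranspose] using (Unitary.star_mul_self_of_mem V.2)
  rw [Matrix.mul_sub, Matrix.sub_mul]
  congr 1
  · simp only [← mul_assoc, hU, one_mul]
  · simp only [mul_assoc, hV, mul_one]

lemma frobSq_diag_comm {n : ℕ} (d e : Fin n → ℂ) (W : Matrix (Fin n) (Fin n) ℂ) :
    frobSq (Matrix.diagonal d * W - W * Matrix.diagonal e)
      = ∑ i, ∑ j, ‖d i - e j‖ ^ 2 * ‖W i j‖ ^ 2 := by
  unfold frobSq
  refine Finset.sum_congr rfl fun i _ => Finset.sum_congr rfl fun j _ => ?_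
  rw [Matrix.sub_apply, Matrix.diagonal_mul, Matrix.mul_diagonal,
    mul_comm (W i j) (e j), ← sub_mul, norm_mul, mul_pow]

/-- Frobenius-norm Lipschitz bound for eigenvalue transformations: if `f` is `L`-Lipschitz
on a set containing all eigenvalues of the Hermitian matrices `A` and `B`, then
`‖f(A) − f(B)‖_F ≤ L ‖A − B‖_F`. -/
theorem stmt18 {n : ℕ} (L : ℝ) (A B : Matrix (Fin n) (Fin n) ℂ)
    (hA : A.IsHermitian) (hB : B.IsHermitian)
    (f : ℝ → ℂ) (s : Set ℝ)
    (hf : ∀ x ∈ s, ∀ y ∈ s, ‖f x - f y‖ ≤ L * |x - y|)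
    (hAs : ∀ i, hA.eigenvalues i ∈ s) (hBs : ∀ i, hB.eigenvalues i ∈ s) :
    Real.sqrt (frobSq (hermFun hA f - hermFun hB f))
      ≤ L * Real.sqrt (frobSq (A - B)) := by
  set U := hA.eigenvectorUnitary with hUdef
  set V := hB.eigenvectorUnitary with hVdef
  set W := (U : Matrix (Fin n) (Fin n) ℂ)ᴴ * (V : Matrix (Fin n) (Fin n) ℂ) with hWdef
  have h1 : frobSq (hermFun hA f - hermFun hB f)
      = ∑ i, ∑ j, ‖f (hA.eigenvalues i) - f (hB.eigenvalues j)‖ ^ 2 * ‖W i j‖ ^ 2 := by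
    rw [← frobSq_conj U V, show hermFun hA f - hermFun hB f =
      (U : Matrix (Fin n) (Fin n) ℂ) * Matrix.diagonal (f ∘ hA.eigenvalues) *
        (U : Matrix (Fin n) (Fin n) ℂ)ᴴ -
      (V : Matrix (Fin n) (Fin n) ℂ) * Matrix.diagonal (f ∘ hB.eigenvalues) *
        (V : Matrix (Fin n) (Fin n) ℂ)ᴴ from rfl, key_conj, frobSq_diag_comm]
    simp [Function.comp]
    rfl
  have h2 : frobSq (A - B)
      = ∑ i, ∑ j, ‖((hA.eigenvalues i : ℂ)) - ((hB.eigenvalues j : ℂ))‖ ^ 2 * ‖W i j‖ ^ 2 := by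
    rw [← frobSq_conj U V, show A - B =
      (U : Matrix (Fin n) (Fin n) ℂ) * Matrix.diagonal (RCLike.ofReal ∘ hA.eigenvalues) *
        (U : Matrix (Fin n) (Fin n) ℂ)ᴴ -
      (V : Matrix (Fin n) (Fin n) ℂ) * Matrix.diagonal (RCLike.ofReal ∘ hB.eigenvalues) *
        (V : Matrix (Fin n) (Fin n) ℂ)ᴴ by
        rw [← Matrix.star_eq_conjTranspose, ← Matrix.star_eq_conjTranspose]
        exact congrArg₂ (· - ·) hA.spectral_theorem hB.spectral_theorem,
      key_conj, frobSq_diag_comm]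
    simp [Function.comp]
    rfl
  have hnorm : ∀ (x y : ℝ), ‖(x : ℂ) - (y : ℂ)‖ = |x - y| := by
    intro x y
    rw [← Complex.ofReal_sub, Complex.norm_real, Real.norm_eq_abs]
  have hterm : ∀ i j, ‖f (hA.eigenvalues i) - f (hB.eigenvalues j)‖ ^ 2
      ≤ L ^ 2 * ‖((hA.eigenvalues i : ℂ)) - ((hB.eigenvalues j : ℂ))‖ ^ 2 := by
    intro i j
    have h := hf _ (hAs i) _ (hBs j)
    have h' : ‖f (hA.eigenvalues i) - f (hB.eigenvalues j)‖
        ≤ |L| * |hA.eigenvalues i - hB.eigenvalues j| :=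
      h.trans (mul_le_mul_of_nonneg_right (le_abs_self L) (abs_nonneg _))
    calc ‖f (hA.eigenvalues i) - f (hB.eigenvalues j)‖ ^ 2
        ≤ (|L| * |hA.eigenvalues i - hB.eigenvalues j|) ^ 2 :=
          pow_le_pow_left₀ (norm_nonneg _) h' 2
      _ = L ^ 2 * ‖((hA.eigenvalues i : ℂ)) - ((hB.eigenvalues j : ℂ))‖ ^ 2 := by
          rw [mul_pow, sq_abs, hnorm]
  have hsum : frobSq (hermFun hA f - hermFun hB f) ≤ L ^ 2 * frobSq (A - B) := by
    rw [h1, h2, Finset.mul_sum]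
    refine Finset.sum_le_sum fun i _ => ?_
    rw [Finset.mul_sum]
    refine Finset.sum_le_sum fun j _ => ?_
    rw [← mul_assoc]
    exact mul_le_mul_of_nonneg_right (hterm i j) (by positivity)
  have hmain : Real.sqrt (frobSq (hermFun hA f - hermFun hB f))
      ≤ |L| * Real.sqrt (frobSq (A - B)) := by
    calc Real.sqrt (frobSq (hermFun hA f - hermFun hB f))
        ≤ Real.sqrt (L ^ 2 * frobSq (A - B)) := Real.sqrt_le_sqrt hsum
      _ = |L| * Real.sqrt (frobSq (A - B)) := by
          rw [Real.sqrt_mul (sq_nonneg L), Real.sqrt_sq_eq_abs]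
  rcases le_or_gt 0 L with hL | hL
  · rwa [abs_of_nonneg hL] at hmain
  · have hzero : frobSq (A - B) = 0 := by
      rw [h2]
      refine Finset.sum_eq_zero fun i _ => Finset.sum_eq_zero fun j _ => ?_
      have heq : hA.eigenvalues i = hB.eigenvalues j := by
        by_contra hne
        have h := hf _ (hAs i) _ (hBs j)
        have h0 : (0 : ℝ) < |hA.eigenvalues i - hB.eigenvalues j| :=
          abs_pos.mpr (sub_ne_zero.mpr hne)
        nlinarith [norm_nonneg (f (hA.eigenvalues i) - f (hB.eigenvalues j))]
      rw [heq]
      simp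
    rw [hzero, Real.sqrt_zero, mul_zero] at hmain ⊢
    simpa using hmain
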